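/- There exists a natural number N such that for all natural numbers n ≥ N the following holds. Let φ be a real number with 1 ≤ φ < log n / log log n, let k = 24·⌈n^{1/φ}⌉ + 1, and let m be an integer with 1 ≤ m ≤ (12/φ)·n^{1/φ}·ln n. If m balls are thrown independently and uniformly at random into k bins, then with probability at least 1 − 1/(2·n^{1/φ}) some bin contains exactly one ball. (Lemma 1 of the paper: in the radio-network interpretation, a station receives the message exactly when some time slot of Balls-into-Bins(k) is chosen by exactly one of its m transmitting neighbors.) -/

import Mathlib

open Finset MeasureTheory ProbabilityTheory

section BallsLemmas
open Nat

/-- no bin has exactly one ball -/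
def Bad {α : Type*} (k : ℕ) (f : α → Fin k) : Prop := ∀ j, ¬ ∃! i, f i = j

open Classical in
noncomputable def badSet (α : Type*) [Fintype α] [DecidableEq α] (k : ℕ) :
    Finset (α → Fin k) :=
  Finset.univ.filter (fun f => Bad k f)

lemma existsUnique_iff_filter_card {α β : Type*} [Fintype α] [DecidableEq α] [DecidableEq β]
    (f : α → β) (j : β) :
    (∃! i, f i = j) ↔ (univ.filter (fun i => f i = j)).card = 1 := by
  rw [Finset.card_eq_one]
  constructor
  · rintro ⟨i, hi, hu⟩
    refine ⟨i, ?_⟩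
    ext a
    simp only [Finset.mem_filter, Finset.mem_univ, true_and, Finset.mem_singleton]
    exact ⟨fun h => hu a h, fun h => h ▸ hi⟩
  · rintro ⟨i, hi⟩
    have hmem : ∀ a, f a = j ↔ a = i := by
      intro a
      have := Finset.ext_iff.1 hi a
      simpa using this
    exact ⟨i, (hmem i).2 rfl, fun a ha => (hmem a).1 ha⟩

lemma badSet_card_le_choose {m k : ℕ} (ht : m / 2 ≤ k) :
    (badSet (Fin m) k).card ≤ k.choose (m / 2) * (m / 2) ^ m := by
  classical
  set t := m / 2 with htdef
  have hsub : badSet (Fin m) k ⊆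
      ((univ : Finset (Fin k)).powersetCard t).biUnion
        (fun T => univ.filter (fun f : Fin m → Fin k => ∀ i, f i ∈ T)) := by
    intro f hf
    have hbad : Bad k f := by
      exact (Finset.mem_filter.1 hf).2
    -- image has card ≤ t
    have himcard : 2 * (univ.image f).card ≤ m := by
      have hcard : (univ : Finset (Fin m)).card = ∑ j ∈ univ.image f,
          (univ.filter (fun i => f i = j)).card :=
        Finset.card_eq_sum_card_fiberwise (fun i _ => Finset.mem_image_of_mem f (Finset.mem_univ i))
      have h2 : ∀ j ∈ univ.image f, 2 ≤ (univ.filter (fun i => f i = j)).card := by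
        intro j hj
        rcases Finset.mem_image.1 hj with ⟨i, _, hi⟩
        have hne0 : (univ.filter (fun i => f i = j)).card ≠ 0 := by
          simp only [ne_eq, Finset.card_eq_zero, Finset.eq_empty_iff_forall_notMem]
          intro h
          exact h i (by simp [hi])
        have hne1 : (univ.filter (fun i => f i = j)).card ≠ 1 := by
          intro h
          exact hbad j ((existsUnique_iff_filter_card f j).2 h)
        omega
      calc 2 * (univ.image f).card = ∑ _j ∈ univ.image f, 2 := by
            rw [Finset.sum_const]; ring
        _ ≤ ∑ j ∈ univ.image f, (univ.filter (fun i => f i = j)).card :=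
            Finset.sum_le_sum h2
        _ = m := by rw [← hcard, Finset.card_univ, Fintype.card_fin]
    have himle : (univ.image f).card ≤ t := by omega
    obtain ⟨T, hT'⟩ := Finset.exists_subsuperset_card_eq
      (Finset.subset_univ (univ.image f)) himle (by simpa using ht)
    obtain ⟨hTsub, hTuniv, hTcard⟩ := hT'
    refine Finset.mem_biUnion.2 ⟨T, ?_, ?_⟩
    · exact Finset.mem_powersetCard.2 ⟨Finset.subset_univ T, hTcard⟩
    · refine Finset.mem_filter.2 ⟨Finset.mem_univ _, fun i => ?_⟩
      exact hTsub (Finset.mem_image_of_mem f (Finset.mem_univ i))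
  calc (badSet (Fin m) k).card
      ≤ (((univ : Finset (Fin k)).powersetCard t).biUnion
        (fun T => univ.filter (fun f : Fin m → Fin k => ∀ i, f i ∈ T))).card :=
        Finset.card_le_card hsub
    _ ≤ ∑ T ∈ (univ : Finset (Fin k)).powersetCard t,
        (univ.filter (fun f : Fin m → Fin k => ∀ i, f i ∈ T)).card :=
        Finset.card_biUnion_le
    _ ≤ ∑ _T ∈ (univ : Finset (Fin k)).powersetCard t, t ^ m := by
        refine Finset.sum_le_sum fun T hT => ?_
        have hTcard : T.card = t := (Finset.mem_powersetCard.1 hT).2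
        have : (univ.filter (fun f : Fin m → Fin k => ∀ i, f i ∈ T)).card
            ≤ (univ : Finset (Fin m → {x // x ∈ T})).card := by
          refine Finset.card_le_card_of_surjOn (fun g i => ↑(g i)) ?_
          intro f hf
          simp only [Finset.coe_filter, Set.mem_setOf_eq, Finset.mem_univ, true_and] at hf
          exact ⟨fun i => ⟨f i, hf i⟩, by simp, rfl⟩
        calc (univ.filter (fun f : Fin m → Fin k => ∀ i, f i ∈ T)).card
            ≤ (univ : Finset (Fin m → {x // x ∈ T})).card := this
          _ = t ^ m := by
              rw [Finset.card_univ, Fintype.card_fun]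
              simp [hTcard]
    _ = k.choose t * t ^ m := by
        rw [Finset.sum_const, Finset.card_powersetCard, Finset.card_univ, Fintype.card_fin,
          smul_eq_mul]

lemma one_le_exp_sub (x : ℝ) : 1 ≤ Real.exp x - x := by
  have := Real.add_one_le_exp x; linarith

lemma badSet_mul_le (x : ℝ) (hx : 0 ≤ x) :
    ∀ (k : ℕ) (α : Type) [Fintype α] [DecidableEq α],
      ((badSet α k).card : ℝ) * x ^ (Fintype.card α)
        ≤ (Real.exp x - x) ^ k * (Fintype.card α) ! := by
  have hex : 1 ≤ Real.exp x - x := one_le_exp_sub x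
  intro k
  induction k with
  | zero =>
    intro α _ _
    rcases isEmpty_or_nonempty α with h | h
    · have hcard0 : Fintype.card α = 0 := Fintype.card_eq_zero
      have h1 : (badSet α 0).card ≤ 1 := by
        calc (badSet α 0).card ≤ Fintype.card (α → Fin 0) := Finset.card_le_univ _
          _ = 1 := by rw [Fintype.card_fun]; simp [hcard0]
      rw [hcard0]
      simpa using (by exact_mod_cast h1 : ((badSet α 0).card : ℝ) ≤ 1)
    · have : IsEmpty (α → Fin 0) := by
        obtain ⟨a⟩ := h
        exact ⟨fun f => (f a).elim0⟩
      have h0 : (badSet α 0).card = 0 := by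
        rw [Finset.card_eq_zero, Finset.eq_empty_iff_forall_notMem]
        intro f _; exact this.elim f
      rw [h0]
      simp only [Nat.cast_zero, zero_mul]
      positivity
  | succ k ih =>
    intro α _ _
    classical
    set n := Fintype.card α with hn
    set T : (α → Fin (k+1)) → Finset α :=
      fun f => univ.filter (fun i => f i = Fin.last k) with hT
    -- fiberwise decomposition
    have hdecomp : (badSet α (k+1)).card =
        ∑ S ∈ (univ : Finset (Finset α)), ((badSet α (k+1)).filter (fun f => T f = S)).card :=
      Finset.card_eq_sum_card_fiberwise (fun f _ => Finset.mem_univ _)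
    -- per-fiber bound
    have hterm : ∀ S : Finset α,
        (((badSet α (k+1)).filter (fun f => T f = S)).card : ℝ) * x ^ n
          ≤ if S.card = 1 then 0 else (Real.exp x - x) ^ k * (n - S.card) ! * x ^ S.card := by
      intro S
      have hSn : S.card ≤ n := by
        rw [hn]; simpa using Finset.card_le_univ S
      by_cases h1 : S.card = 1
      · rw [if_pos h1]
        have : ((badSet α (k+1)).filter (fun f => T f = S)) = ∅ := by
          rw [Finset.eq_empty_iff_forall_notMem]
          intro f hf
          obtain ⟨hfbad, hfT⟩ := Finset.mem_filter.1 hf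
          have hbad : Bad (k+1) f := (Finset.mem_filter.1 hfbad).2
          obtain ⟨i₀, hi₀⟩ := Finset.card_eq_one.1 h1
          refine hbad (Fin.last k) ⟨i₀, ?_, ?_⟩
          · have : i₀ ∈ T f := by rw [hfT, hi₀]; exact Finset.mem_singleton_self i₀
            simpa [hT] using this
          · intro i hi
            have : i ∈ T f := by simp [hT, hi]
            rw [hfT, hi₀] at this
            exact Finset.mem_singleton.1 this
        simp [this]
      · rw [if_neg h1]
        -- surjection from badSet on the complement subtype
        have hsurj : (((badSet α (k+1)).filter (fun f => T f = S)).card : ℕ)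
            ≤ (badSet {i // i ∈ Sᶜ} k).card := by
          refine Finset.card_le_card_of_surjOn
            (fun g (i : α) => if h : i ∈ S then Fin.last k
              else (g ⟨i, Finset.mem_compl.2 h⟩).castSucc) ?_
          intro f hf
          simp only [Finset.coe_filter, Set.mem_setOf_eq] at hf
          obtain ⟨hfbad, hfT⟩ := hf
          have hbad : Bad (k+1) f := by simpa [badSet] using (Finset.mem_filter.1 hfbad).2
          have hne : ∀ i : {i // i ∈ Sᶜ}, f ↑i ≠ Fin.last k := by
            intro i hi
            have : (i : α) ∈ T f := by simp [hT, hi]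
            rw [hfT] at this
            exact (Finset.mem_compl.1 i.2) this
          refine ⟨fun i => (f ↑i).castPred (hne i), ?_, ?_⟩
          · -- membership in badSet of the subtype
            simp only [Finset.mem_coe, badSet, Finset.mem_filter, Finset.mem_univ, true_and]
            intro j hj
            obtain ⟨i₀, hgi₀, huniq⟩ := hj
            have hgi₀' : (f ↑i₀).castPred (hne i₀) = j := hgi₀
            refine hbad j.castSucc ⟨↑i₀, ?_, ?_⟩
            · show f ↑i₀ = j.castSucc
              rw [← Fin.castSucc_castPred (f ↑i₀) (hne i₀), hgi₀']
            · intro i hi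
              have hi' : f i = j.castSucc := hi
              have hiS : i ∈ Sᶜ := by
                refine Finset.mem_compl.2 fun hiS => ?_
                have hmemT : i ∈ T f := hfT ▸ hiS
                have hlast : f i = Fin.last k := by simpa [hT] using hmemT
                exact (Fin.castSucc_lt_last j).ne (hi'.symm.trans hlast)
              have hgi : (fun (i : {i // i ∈ Sᶜ}) => (f ↑i).castPred (hne i)) ⟨i, hiS⟩ = j := by
                show (f i).castPred _ = j
                simp_rw [hi']
                exact Fin.castPred_castSucc
              have := huniq ⟨i, hiS⟩ hgi
              exact congrArg Subtype.val this
          · funext i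
            show (if h : i ∈ S then Fin.last k else _) = f i
            by_cases hiS : i ∈ S
            · rw [dif_pos hiS]
              have hmemT : i ∈ T f := hfT ▸ hiS
              have : f i = Fin.last k := by simpa [hT] using hmemT
              exact this.symm
            · rw [dif_neg hiS]
              exact Fin.castSucc_castPred _ _
        have hcardsub : Fintype.card {i // i ∈ Sᶜ} = n - S.card := by
          rw [Fintype.card_coe, Finset.card_compl, hn]
        have hih := ih {i // i ∈ Sᶜ}
        rw [hcardsub] at hih
        have hxpow : x ^ n = x ^ (n - S.card) * x ^ S.card := by
          rw [← pow_add]; congr 1; omega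
        calc (((badSet α (k+1)).filter (fun f => T f = S)).card : ℝ) * x ^ n
            ≤ ((badSet {i // i ∈ Sᶜ} k).card : ℝ) * x ^ n := by
              have : (((badSet α (k+1)).filter (fun f => T f = S)).card : ℝ)
                  ≤ ((badSet {i // i ∈ Sᶜ} k).card : ℝ) := by exact_mod_cast hsurj
              exact mul_le_mul_of_nonneg_right this (by positivity)
          _ = ((badSet {i // i ∈ Sᶜ} k).card : ℝ) * x ^ (n - S.card) * x ^ S.card := by
              rw [hxpow, mul_assoc]
          _ ≤ (Real.exp x - x) ^ k * (n - S.card) ! * x ^ S.card :=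
              mul_le_mul_of_nonneg_right hih (by positivity)
    -- sum the bounds
    have hsum : ((badSet α (k+1)).card : ℝ) * x ^ n
        ≤ ∑ S ∈ (univ : Finset (Finset α)),
            (if S.card = 1 then 0 else (Real.exp x - x) ^ k * (n - S.card) ! * x ^ S.card) := by
      rw [hdecomp]
      push_cast
      rw [Finset.sum_mul]
      exact Finset.sum_le_sum fun S _ => hterm S
    -- group by cardinality
    have hgroup : ∑ S ∈ (univ : Finset (Finset α)),
          (if S.card = 1 then (0:ℝ) else (Real.exp x - x) ^ k * (n - S.card) ! * x ^ S.card)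
        = ∑ s ∈ Finset.range (n + 1), (n.choose s : ℝ) *
            (if s = 1 then 0 else (Real.exp x - x) ^ k * (n - s) ! * x ^ s) := by
      have hres := Finset.sum_powerset_apply_card
        (fun s => if s = 1 then (0:ℝ) else (Real.exp x - x) ^ k * (n - s) ! * x ^ s)
        (x := (univ : Finset α))
      rw [Finset.powerset_univ] at hres
      rw [hres, Finset.card_univ, ← hn]
      exact Finset.sum_congr rfl fun s _ => by rw [nsmul_eq_mul]
    -- bound the grouped sum
    have hfinal : ∑ s ∈ Finset.range (n + 1), (n.choose s : ℝ) *
          (if s = 1 then 0 else (Real.exp x - x) ^ k * (n - s) ! * x ^ s)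
        ≤ (Real.exp x - x) ^ (k+1) * n ! := by
      have hstep : ∀ s ∈ Finset.range (n+1), (n.choose s : ℝ) *
            (if s = 1 then 0 else (Real.exp x - x) ^ k * (n - s) ! * x ^ s)
          ≤ (Real.exp x - x) ^ k * (if s = 1 then 0 else (n ! : ℝ) * (x ^ s / s !)) := by
        intro s hs
        have hsn : s ≤ n := Nat.lt_succ_iff.1 (Finset.mem_range.1 hs)
        by_cases h1 : s = 1
        · simp [h1]
        · rw [if_neg h1, if_neg h1]
          have hmulfac : (n.choose s : ℝ) * s ! * (n - s) ! = n ! := by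
            exact_mod_cast congrArg (Nat.cast (R := ℝ))
              (Nat.choose_mul_factorial_mul_factorial hsn)
          have hfacne : (s ! : ℝ) ≠ 0 := Nat.cast_ne_zero.2 (Nat.factorial_ne_zero s)
          have hch : (n.choose s : ℝ) * (n - s) ! = n ! / s ! := by
            field_simp
            linear_combination hmulfac
          have h2 : (n.choose s : ℝ) * ((Real.exp x - x) ^ k * (n - s) ! * x ^ s)
              = (Real.exp x - x) ^ k * ((n ! : ℝ) / s !) * x ^ s := by
            rw [← hch]; ring
          rw [h2]
          apply le_of_eq
          ring
      calc ∑ s ∈ Finset.range (n + 1), (n.choose s : ℝ) *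
            (if s = 1 then 0 else (Real.exp x - x) ^ k * (n - s) ! * x ^ s)
          ≤ ∑ s ∈ Finset.range (n + 1),
              (Real.exp x - x) ^ k * (if s = 1 then 0 else (n ! : ℝ) * (x ^ s / s !)) :=
            Finset.sum_le_sum hstep
        _ = (Real.exp x - x) ^ k * ∑ s ∈ Finset.range (n + 1),
              (if s = 1 then 0 else (n ! : ℝ) * (x ^ s / s !)) := by
            rw [Finset.mul_sum]
        _ ≤ (Real.exp x - x) ^ k * ((Real.exp x - x) * n !) := by
            refine mul_le_mul_of_nonneg_left ?_ (by positivity)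
            -- key sum bound
            rcases Nat.eq_zero_or_pos n with hn0 | hn1
            · rw [hn0]
              rw [show (0:ℕ)+1 = 1 from rfl, Finset.range_one, Finset.sum_singleton]
              norm_num [Nat.factorial]
              linarith [hex]
            · have h1mem : 1 ∈ Finset.range (n+1) := by
                simp only [Finset.mem_range]; omega
              have hsplit : ∑ s ∈ Finset.range (n+1),
                    (if s = 1 then (0:ℝ) else (n ! : ℝ) * (x ^ s / s !))
                  = ∑ s ∈ (Finset.range (n+1)).erase 1, (n ! : ℝ) * (x ^ s / s !) := by
                rw [← Finset.sum_erase_add _ _ h1mem, if_pos rfl, add_zero]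
                exact Finset.sum_congr rfl fun s hs => if_neg (Finset.ne_of_mem_erase hs)
              have hsplit2 : (∑ s ∈ (Finset.range (n+1)).erase 1, (n ! : ℝ) * (x ^ s / s !))
                    + (n ! : ℝ) * (x ^ 1 / 1 !)
                  = ∑ s ∈ Finset.range (n+1), (n ! : ℝ) * (x ^ s / s !) :=
                Finset.sum_erase_add _ _ h1mem
              have hexp : ∑ s ∈ Finset.range (n+1), (n ! : ℝ) * (x ^ s / s !)
                  ≤ (n ! : ℝ) * Real.exp x := by
                rw [← Finset.mul_sum]
                exact mul_le_mul_of_nonneg_left (Real.sum_le_exp_of_nonneg hx _)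
                  (by positivity)
              have hone : (n ! : ℝ) * (x ^ 1 / 1 !) = (n ! : ℝ) * x := by
                norm_num [Nat.factorial]
              rw [hsplit]
              rw [hone] at hsplit2
              linarith [hexp, hsplit2]
        _ = (Real.exp x - x) ^ (k+1) * n ! := by ring
    calc ((badSet α (k+1)).card : ℝ) * x ^ n
        ≤ _ := hsum
      _ = _ := hgroup
      _ ≤ (Real.exp x - x) ^ (k+1) * n ! := hfinal

lemma fact_bound : ∀ m : ℕ, 1 ≤ m →
    (m ! : ℝ) * Real.exp 1 ^ m ≤ Real.exp 1 * m * (m : ℝ) ^ m := by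
  intro m
  induction m with
  | zero => intro h; omega
  | succ m ih =>
    intro _
    rcases Nat.eq_zero_or_pos m with hm0 | hm1
    · subst hm0
      simp [Nat.factorial]
    · have ihm := ih hm1
      have hmpos : (0:ℝ) < m := by exact_mod_cast hm1
      have hepos : (0:ℝ) < Real.exp 1 := Real.exp_pos 1
      -- key : exp 1 * m^(m+1) ≤ (m+1)^(m+1)
      have hx : Real.exp (1/((m:ℝ)+1)) ≤ ((m:ℝ)+1)/m := by
        have h2 := Real.add_one_le_exp (-(1/((m:ℝ)+1)))
        rw [Real.exp_neg] at h2
        have hpos : (0:ℝ) < 1 - 1/((m:ℝ)+1) := by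
          have : 1/((m:ℝ)+1) < 1 := by
            rw [div_lt_one (by linarith)]; linarith
          linarith
        have h3 : Real.exp (1/((m:ℝ)+1)) * (1 - 1/((m:ℝ)+1)) ≤ 1 := by
          have h4 := mul_le_mul_of_nonneg_left (by linarith [h2] :
            1 - 1/((m:ℝ)+1) ≤ (Real.exp (1/((m:ℝ)+1)))⁻¹) (Real.exp_pos (1/((m:ℝ)+1))).le
          rwa [mul_inv_cancel₀ (Real.exp_ne_zero _)] at h4
        have h5 : Real.exp (1/((m:ℝ)+1)) ≤ 1 / (1 - 1/((m:ℝ)+1)) :=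
          (le_div_iff₀ hpos).2 h3
        have h6 : 1 / (1 - 1/((m:ℝ)+1)) = ((m:ℝ)+1)/m := by
          rw [eq_div_iff (ne_of_gt hmpos)]
          field_simp
          rw [add_sub_cancel_right, div_self (ne_of_gt hmpos)]
        rwa [h6] at h5
      have hq : Real.exp 1 ≤ (((m:ℝ)+1)/m) ^ (m+1) := by
        have : Real.exp 1 = Real.exp (1/((m:ℝ)+1)) ^ (m+1) := by
          rw [← Real.exp_nat_mul]
          congr 1
          push_cast
          field_simp
        rw [this]
        exact pow_le_pow_left₀ (Real.exp_nonneg _) hx _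
      have hkey : Real.exp 1 * (m:ℝ)^(m+1) ≤ ((m:ℝ)+1)^(m+1) := by
        have h7 : (((m:ℝ)+1)/m) ^ (m+1) * (m:ℝ)^(m+1) = ((m:ℝ)+1)^(m+1) := by
          rw [div_pow]
          field_simp
        calc Real.exp 1 * (m:ℝ)^(m+1) ≤ (((m:ℝ)+1)/m) ^ (m+1) * (m:ℝ)^(m+1) :=
              mul_le_mul_of_nonneg_right hq (by positivity)
          _ = ((m:ℝ)+1)^(m+1) := h7
      -- assemble
      have hfact : ((m+1)! : ℝ) = ((m:ℝ)+1) * m ! := by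
        rw [Nat.factorial_succ]; push_cast; ring
      have hcast : ((m+1 : ℕ) : ℝ) = (m:ℝ)+1 := by push_cast; ring
      rw [hfact, hcast]
      have step1 : ((m:ℝ)+1) * (m ! : ℝ) * Real.exp 1 ^ (m+1)
          = ((m:ℝ)+1) * Real.exp 1 * ((m ! : ℝ) * Real.exp 1 ^ m) := by
        rw [pow_succ]; ring
      rw [step1]
      calc ((m:ℝ)+1) * Real.exp 1 * ((m ! : ℝ) * Real.exp 1 ^ m)
          ≤ ((m:ℝ)+1) * Real.exp 1 * (Real.exp 1 * m * (m:ℝ)^m) := by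
            refine mul_le_mul_of_nonneg_left ihm (by positivity)
        _ = ((m:ℝ)+1) * (Real.exp 1 * (Real.exp 1 * ((m:ℝ)^(m+1)))) := by
            rw [pow_succ]; ring
        _ ≤ ((m:ℝ)+1) * (Real.exp 1 * ((m:ℝ)+1)^(m+1)) := by
            refine mul_le_mul_of_nonneg_left ?_ (by linarith)
            exact mul_le_mul_of_nonneg_left hkey hepos.le
        _ = Real.exp 1 * ((m:ℝ)+1) * ((m:ℝ)+1)^(m+1) := by ring

lemma small_case (k t t' m : ℕ) (K p : ℝ)
    (hK : (k:ℝ) = K) (htt' : t + t' = m) (htle : t ≤ t') (ht'1 : 1 ≤ t')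
    (hp1 : 1 ≤ p) (h24 : 24 * p ≤ K) (het : Real.exp 1 * t ≤ K/4) :
    (k.choose t : ℝ) * (t:ℝ)^m ≤ K^m * (1/(2*p)) := by
  have hepos : (0:ℝ) < Real.exp 1 := Real.exp_pos 1
  have hKpos : (0:ℝ) < K := by linarith
  have hppos : (0:ℝ) < p := by linarith
  obtain ⟨s, hs⟩ : ∃ s, t' = s + 1 := ⟨t' - 1, by omega⟩
  -- choose bound
  have h1 : (k.choose t : ℝ) ≤ K^t / t ! := by
    have := Nat.choose_le_pow_div (α := ℝ) t k
    rwa [hK] at this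
  -- t^t ≤ t! e^t
  have h2 : (t:ℝ)^t ≤ (t ! : ℝ) * Real.exp 1 ^ t := by
    have hterm : (t:ℝ)^t / t ! ≤ Real.exp t := by
      calc (t:ℝ)^t / t ! ≤ ∑ i ∈ Finset.range (t+1), (t:ℝ)^i / i ! := by
            refine Finset.single_le_sum (f := fun i => (t:ℝ)^i / i !) ?_ ?_
            · intro i _; positivity
            · simp
        _ ≤ Real.exp t := Real.sum_le_exp_of_nonneg (by positivity) _
    have hexpt : Real.exp (t:ℝ) = Real.exp 1 ^ t := by
      rw [← Real.exp_nat_mul]; norm_num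
    have hfacpos : (0:ℝ) < (t ! : ℝ) := by exact_mod_cast Nat.factorial_pos t
    rw [div_le_iff₀ hfacpos] at hterm
    calc (t:ℝ)^t ≤ Real.exp t * t ! := hterm
      _ = (t ! : ℝ) * Real.exp 1 ^ t := by rw [hexpt]; ring
  -- core : 2p * (e*t)^t' ≤ K^t'
  have hcore : (2*p) * (Real.exp 1 * t)^t' ≤ K^t' := by
    have het4 : Real.exp 1 * t ≤ 12 * 4^s := by
      have ht4 : (t:ℝ) ≤ 4^(s+1) := by
        have : t < 4^t := Nat.lt_pow_self (n := t) (by norm_num)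
        have h4 : (4:ℕ)^t ≤ 4^(s+1) := Nat.pow_le_pow_right (by norm_num) (by omega)
        exact_mod_cast (this.le.trans h4)
      have he3 : Real.exp 1 ≤ 3 := by
        have := Real.exp_one_lt_d9; linarith
      have htnn : (0:ℝ) ≤ t := Nat.cast_nonneg t
      calc Real.exp 1 * t ≤ 3 * t := mul_le_mul_of_nonneg_right he3 htnn
        _ ≤ 3 * 4^(s+1) := by linarith [mul_le_mul_of_nonneg_left ht4 (by norm_num : (0:ℝ) ≤ 3)]
        _ = 12 * 4^s := by rw [pow_succ]; ring
    have hets : (Real.exp 1 * t)^s ≤ (K/4)^s :=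
      pow_le_pow_left₀ (by positivity) (by linarith) s
    have h2p : 2*p ≤ K/12 := by linarith
    rw [hs, pow_succ, pow_succ]
    have hh : (2*p) * ((Real.exp 1 * t)^s * (Real.exp 1 * t))
        ≤ (K/12) * ((K/4)^s * (12 * 4^s)) := by
      have e1 : (0:ℝ) ≤ (Real.exp 1 * t)^s := by positivity
      have e2 : (0:ℝ) ≤ Real.exp 1 * t := by positivity
      have e3 : (0:ℝ) ≤ 2*p := by linarith
      calc (2*p) * ((Real.exp 1 * t)^s * (Real.exp 1 * t))
          ≤ (2*p) * ((K/4)^s * (12 * 4^s)) := by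
            refine mul_le_mul_of_nonneg_left ?_ e3
            exact mul_le_mul hets het4 e2 (by positivity)
        _ ≤ (K/12) * ((K/4)^s * (12 * 4^s)) := by
            refine mul_le_mul_of_nonneg_right h2p ?_
            positivity
    calc (2*p) * ((Real.exp 1 * ↑t)^s * (Real.exp 1 * ↑t)) ≤ (K/12) * ((K/4)^s * (12 * 4^s)) := hh
      _ = K^s * K := by
        rw [div_pow]
        field_simp
  -- assemble
  have hfacpos : (0:ℝ) < (t ! : ℝ) := by exact_mod_cast Nat.factorial_pos t
  have hchain : (k.choose t : ℝ) * (t:ℝ)^m ≤ K^t * ((Real.exp 1 * t)^t') := by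
    have htm : (t:ℝ)^m = (t:ℝ)^t * (t:ℝ)^t' := by rw [← pow_add, htt']
    have e0 : (0:ℝ) ≤ (t:ℝ)^t' := by positivity
    calc (k.choose t : ℝ) * (t:ℝ)^m = (k.choose t : ℝ) * (t:ℝ)^t * (t:ℝ)^t' := by
          rw [htm]; ring
      _ ≤ (K^t / t !) * (t:ℝ)^t * (t:ℝ)^t' := by
          refine mul_le_mul_of_nonneg_right (mul_le_mul_of_nonneg_right h1 (by positivity)) e0
      _ ≤ (K^t / t !) * ((t ! : ℝ) * Real.exp 1 ^ t) * (t:ℝ)^t' := by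
          refine mul_le_mul_of_nonneg_right (mul_le_mul_of_nonneg_left h2 (by positivity)) e0
      _ = K^t * (Real.exp 1 ^ t * (t:ℝ)^t') := by
          field_simp
      _ ≤ K^t * (Real.exp 1 ^ t' * (t:ℝ)^t') := by
          refine mul_le_mul_of_nonneg_left ?_ (by positivity)
          refine mul_le_mul_of_nonneg_right ?_ (by positivity)
          exact pow_le_pow_right₀ (by linarith [Real.add_one_le_exp (1:ℝ)]) htle
      _ = K^t * ((Real.exp 1 * t)^t') := by rw [mul_pow]
  have hfin : K^t * ((Real.exp 1 * t)^t') ≤ K^m * (1/(2*p)) := by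
    have h2ppos : (0:ℝ) < 2*p := by linarith
    have hKm : K^m = K^t * K^t' := by rw [← pow_add, htt']
    rw [hKm]
    have : (Real.exp 1 * t)^t' ≤ K^t' * (1/(2*p)) := by
      rw [mul_one_div, le_div_iff₀ h2ppos]
      calc (Real.exp 1 * ↑t)^t' * (2*p) = (2*p) * (Real.exp 1 * ↑t)^t' := by ring
        _ ≤ K^t' := hcore
    calc K^t * ((Real.exp 1 * t)^t') ≤ K^t * (K^t' * (1/(2*p))) :=
          mul_le_mul_of_nonneg_left this (by positivity)
      _ = K^t * K^t' * (1/(2*p)) := by ring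
  exact hchain.trans hfin

lemma large_case (k m : ℕ) (K M p u L : ℝ)
    (hK : (k:ℝ) = K) (hM : (m:ℝ) = M) (hp : p = Real.exp u)
    (hu0 : 0 < u) (huL : u ≤ L) (hL : 50 ≤ L)
    (h24 : 24*p < K) (h49 : K ≤ 49*p) (hM1 : 1 ≤ M) (hMu : M ≤ 12*(u*p)) (hM6 : 6*L ≤ M) :
    (Real.exp (M/K) - M/K)^k * (m ! : ℝ) ≤ M^m * (1/(2*p)) := by
  have hppos : (0:ℝ) < p := by rw [hp]; exact Real.exp_pos u
  have hKpos : (0:ℝ) < K := by linarith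
  have hMpos : (0:ℝ) < M := by linarith
  set x : ℝ := M/K with hx
  have hx0 : 0 < x := div_pos hMpos hKpos
  set y : ℝ := x * Real.exp (-x) with hy
  have hy0 : 0 ≤ y := by positivity
  have hy1 : y ≤ 1 := by
    have h1 : x ≤ Real.exp x := by linarith [Real.add_one_le_exp x]
    calc y = x * Real.exp (-x) := rfl
      _ ≤ Real.exp x * Real.exp (-x) := by
          exact mul_le_mul_of_nonneg_right h1 (Real.exp_nonneg _)
      _ = 1 := by rw [← Real.exp_add]; simp
  -- decompose exp x - x
  have hdec : Real.exp x - x = Real.exp x * (1 - y) := by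
    rw [mul_sub, mul_one, hy]
    have : Real.exp x * (x * Real.exp (-x)) = x := by
      rw [show Real.exp x * (x * Real.exp (-x)) = x * (Real.exp x * Real.exp (-x)) by ring,
        ← Real.exp_add]
      simp
    rw [this]
  have hpow : (Real.exp x - x)^k = Real.exp M * (1-y)^k := by
    rw [hdec, mul_pow, ← Real.exp_nat_mul]
    congr 2
    rw [hx, hK]
    field_simp
  have h1y : (1-y)^k ≤ Real.exp (-(K*y)) := by
    have hb : 1 - y ≤ Real.exp (-y) := by linarith [Real.add_one_le_exp (-y)]
    calc (1-y)^k ≤ Real.exp (-y) ^ k := pow_le_pow_left₀ (by linarith) hb k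
      _ = Real.exp (-(K*y)) := by
          rw [← Real.exp_nat_mul]
          congr 1
          rw [hK]; ring
  -- factorial bound
  have hm1 : 1 ≤ m := by
    by_contra h
    push_neg at h
    interval_cases m
    simp at hM
    rw [← hM] at hM1
    norm_num at hM1
  have hfac : (m ! : ℝ) ≤ Real.exp 1 * M * M^m * (Real.exp M)⁻¹ := by
    have hfb := fact_bound m hm1
    rw [hM] at hfb
    have hexpM : Real.exp 1 ^ m = Real.exp M := by
      rw [← Real.exp_nat_mul, mul_one, hM]
    rw [hexpM] at hfb
    have hEM : (0:ℝ) < Real.exp M := Real.exp_pos M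
    have := (le_div_iff₀ hEM).2 hfb
    rwa [div_eq_mul_inv] at this
  -- combine
  have hcomb : (Real.exp x - x)^k * (m ! : ℝ)
      ≤ Real.exp 1 * M * Real.exp (-(K*y)) * M^m := by
    rw [hpow]
    have e1 : (0:ℝ) ≤ Real.exp M := Real.exp_nonneg M
    have e2 : (0:ℝ) ≤ (1-y)^k := pow_nonneg (by linarith) k
    calc Real.exp M * (1-y)^k * (m ! : ℝ)
        ≤ Real.exp M * Real.exp (-(K*y)) * (Real.exp 1 * M * M^m * (Real.exp M)⁻¹) := by
          refine mul_le_mul ?_ hfac (Nat.cast_nonneg _) (by positivity)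
          exact mul_le_mul_of_nonneg_left h1y e1
      _ = Real.exp 1 * M * Real.exp (-(K*y)) * M^m * (Real.exp M * (Real.exp M)⁻¹) := by ring
      _ = Real.exp 1 * M * Real.exp (-(K*y)) * M^m := by
          rw [mul_inv_cancel₀ (Real.exp_ne_zero M), mul_one]
  -- the exponential inequality : 2*p*exp 1*M ≤ exp (K*y)
  have hKy : K * y = M * Real.exp (-x) := by
    rw [hy, hx]
    field_simp
  have hlogM : Real.log M ≤ Real.log 12 + Real.log u + u := by
    have h12up : M ≤ 12*(u*p) := hMu
    have hpos12 : (0:ℝ) < 12*(u*p) := by positivity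
    calc Real.log M ≤ Real.log (12*(u*p)) := Real.log_le_log hMpos h12up
      _ = Real.log 12 + (Real.log u + Real.log p) := by
          rw [Real.log_mul (by norm_num) (by positivity), Real.log_mul (ne_of_gt hu0) (ne_of_gt hppos)]
      _ = Real.log 12 + Real.log u + u := by rw [hp, Real.log_exp]; ring
  have hln2 : Real.log 2 < 0.6931471808 := Real.log_two_lt_d9
  have hexpineq : Real.log 2 + u + 1 + Real.log M ≤ K * y := by
    rcases le_or_gt M K with hMK | hMK
    · -- case M ≤ K : K*y ≥ M * exp(-1) ≥ M/e
      have hxle1 : x ≤ 1 := by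
        rw [hx, div_le_one hKpos]; exact hMK
      have hKyge : M * Real.exp (-1) ≤ K * y := by
        rw [hKy]
        refine mul_le_mul_of_nonneg_left ?_ hMpos.le
        exact Real.exp_le_exp.2 (by linarith)
      have hlogK : Real.log M ≤ Real.log 49 + u := by
        have : Real.log M ≤ Real.log K := Real.log_le_log hMpos hMK
        have h2 : Real.log K ≤ Real.log (49*p) := Real.log_le_log hKpos h49
        rw [Real.log_mul (by norm_num) (ne_of_gt hppos), hp, Real.log_exp] at h2
        linarith
      have hlog49 : Real.log 49 ≤ 6 * Real.log 2 := by
        calc Real.log 49 ≤ Real.log 64 := Real.log_le_log (by norm_num) (by norm_num)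
          _ = 6 * Real.log 2 := by
            rw [show (64:ℝ) = 2^6 by norm_num, Real.log_pow]
            push_cast; ring
      have hecst : (2.2:ℝ) * L ≤ M * Real.exp (-1) := by
        have hc : (2.7182818286 : ℝ)⁻¹ ≤ Real.exp (-1) := by
          rw [Real.exp_neg]
          have h1 := Real.exp_one_lt_d9
          have h2 : (0:ℝ) < Real.exp 1 := Real.exp_pos 1
          exact inv_anti₀ h2 h1.le
        have hnum : (2.2:ℝ) ≤ 6 * (2.7182818286 : ℝ)⁻¹ := by norm_num
        have hL0 : (0:ℝ) ≤ L := by linarith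
        calc (2.2:ℝ) * L ≤ (6 * (2.7182818286 : ℝ)⁻¹) * L :=
              mul_le_mul_of_nonneg_right hnum hL0
          _ = (6*L) * (2.7182818286 : ℝ)⁻¹ := by ring
          _ ≤ (6*L) * Real.exp (-1) := by
              refine mul_le_mul_of_nonneg_left hc (by linarith)
          _ ≤ M * Real.exp (-1) := by
              refine mul_le_mul_of_nonneg_right hM6 (Real.exp_nonneg _)
      -- total
      linarith [hKyge, hlogK, hlog49, hln2, huL, hL]
    · -- case M > K : K*y ≥ K exp(-u/2) ≥ 24 exp(u/2)
      have hxu2 : x ≤ u/2 := by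
        rw [hx, div_le_iff₀ hKpos]
        nlinarith
      have hKyge : 24 * Real.exp (u/2) ≤ K * y := by
        rw [hKy]
        calc 24 * Real.exp (u/2) = (24 * Real.exp u) * Real.exp (-(u/2)) := by
              have harg : u + -(u/2) = u/2 := by ring
              rw [mul_assoc, ← Real.exp_add, harg]
          _ ≤ K * Real.exp (-(u/2)) := by
              refine mul_le_mul_of_nonneg_right ?_ (Real.exp_nonneg _)
              rw [← hp]; linarith
          _ ≤ K * Real.exp (-x) := by
              refine mul_le_mul_of_nonneg_left (Real.exp_le_exp.2 (by linarith)) hKpos.le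
          _ ≤ M * Real.exp (-x) := by
              refine mul_le_mul_of_nonneg_right hMK.le (Real.exp_nonneg _)
      have hlogu : Real.log u ≤ u - 1 := Real.log_le_sub_one_of_pos hu0
      have hlog12 : Real.log 12 ≤ 4 * Real.log 2 := by
        calc Real.log 12 ≤ Real.log 16 := Real.log_le_log (by norm_num) (by norm_num)
          _ = 4 * Real.log 2 := by
            rw [show (16:ℝ) = 2^4 by norm_num, Real.log_pow]
            push_cast; ring
      have hexpu : 1 + u/2 ≤ Real.exp (u/2) := by linarith [Real.add_one_le_exp (u/2)]
      linarith [hKyge, hlogM, hlogu, hlog12, hln2, hexpu]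
  have hfinal : Real.exp 1 * M * Real.exp (-(K*y)) ≤ 1/(2*p) := by
    have h2pM : 2*p*(Real.exp 1 * M) ≤ Real.exp (K*y) := by
      have : 2*p*(Real.exp 1 * M)
          = Real.exp (Real.log 2 + u + 1 + Real.log M) := by
        rw [Real.exp_add, Real.exp_add, Real.exp_add, Real.exp_log (by norm_num : (0:ℝ) < 2),
          Real.exp_log hMpos, ← hp]
        ring
      rw [this]
      exact Real.exp_le_exp.2 hexpineq
    have hEpos : (0:ℝ) < Real.exp (K*y) := Real.exp_pos _
    have h3 : (2*p*(Real.exp 1 * M)) * (Real.exp (K*y))⁻¹ ≤ 1 := by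
      calc (2*p*(Real.exp 1 * M)) * (Real.exp (K*y))⁻¹
          ≤ Real.exp (K*y) * (Real.exp (K*y))⁻¹ :=
            mul_le_mul_of_nonneg_right h2pM (by positivity)
        _ = 1 := mul_inv_cancel₀ (ne_of_gt hEpos)
    have h2ppos : (0:ℝ) < 2*p := by positivity
    rw [Real.exp_neg, le_div_iff₀ h2ppos]
    calc Real.exp 1 * M * (Real.exp (K*y))⁻¹ * (2*p)
        = (2*p*(Real.exp 1 * M)) * (Real.exp (K*y))⁻¹ := by ring
      _ ≤ 1 := h3
  calc (Real.exp x - x)^k * (m ! : ℝ)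
      ≤ Real.exp 1 * M * Real.exp (-(K*y)) * M^m := hcomb
    _ ≤ (1/(2*p)) * M^m := mul_le_mul_of_nonneg_right hfinal (by positivity)
    _ = M^m * (1/(2*p)) := by ring

lemma transfer {Ω : Type} [MeasurableSpace Ω] (μ : Measure Ω) [IsProbabilityMeasure μ]
    {m k : ℕ} (X : Fin m → Ω → Fin k) (hmeas : ∀ i, Measurable (X i))
    (hindep : iIndepFun X μ)
    (hunif : ∀ i j, μ {ω | X i ω = j} = (k : ENNReal)⁻¹)
    (E : Finset (Fin m → Fin k)) :
    μ {ω | (fun i => X i ω) ∈ E} = E.card * ((k : ENNReal)⁻¹) ^ m ∧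
      MeasurableSet {ω | (fun i => X i ω) ∈ E} := by
  classical
  have hmeasA : ∀ f : Fin m → Fin k, MeasurableSet (⋂ i, X i ⁻¹' {f i}) :=
    fun f => MeasurableSet.iInter fun i => (hmeas i) (measurableSet_singleton _)
  have hsingle : ∀ f : Fin m → Fin k, μ (⋂ i, X i ⁻¹' {f i}) = ((k:ENNReal)⁻¹)^m := by
    intro f
    rw [hindep.meas_iInter (fun i => ⟨{f i}, measurableSet_singleton _, rfl⟩)]
    have hterm : ∀ i : Fin m, μ (X i ⁻¹' {f i}) = (k:ENNReal)⁻¹ := by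
      intro i
      have hseteq : X i ⁻¹' {f i} = {ω | X i ω = f i} := by ext ω; simp
      rw [hseteq, hunif]
    rw [Finset.prod_congr rfl (fun i _ => hterm i), Finset.prod_const, Finset.card_univ,
      Fintype.card_fin]
  have hset : {ω | (fun i => X i ω) ∈ E} = ⋃ f ∈ E, ⋂ i, X i ⁻¹' {f i} := by
    ext ω
    simp only [Set.mem_setOf_eq, Set.mem_iUnion, Set.mem_iInter, Set.mem_preimage,
      Set.mem_singleton_iff]
    constructor
    · intro h; exact ⟨_, h, fun i => rfl⟩
    · rintro ⟨f, hf, hfa⟩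
      have : (fun i => X i ω) = f := funext hfa
      rwa [this]
  have hdisj : (↑E : Set (Fin m → Fin k)).PairwiseDisjoint
      (fun f => ⋂ i, X i ⁻¹' {f i}) := by
    intro f _ g _ hfg
    refine Set.disjoint_left.2 fun ω hωf hωg => hfg ?_
    simp only [Set.mem_iInter, Set.mem_preimage, Set.mem_singleton_iff] at hωf hωg
    funext i
    rw [← hωf i, ← hωg i]
  constructor
  · rw [hset, measure_biUnion_finset hdisj (fun f _ => hmeasA f)]
    rw [Finset.sum_congr rfl (fun f _ => hsingle f), Finset.sum_const, nsmul_eq_mul]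
  · rw [hset]
    exact MeasurableSet.biUnion E.countable_toSet (fun f _ => hmeasA f)


end BallsLemmas

set_option maxHeartbeats 1000000

/-- Lemma 1 of the paper: there is `N` such that for all
`n ≥ N`, all real `1 ≤ φ < log n / log log n` (logs base 2), with
`k = 24·⌈n^(1/φ)⌉ + 1`, and any `1 ≤ m ≤ (12/φ)·n^(1/φ)·ln n`, if `m` balls
are thrown independently and uniformly at random into `k` bins, then with
probability at least `1 − 1/(2·n^(1/φ))` some bin contains exactly one
ball. -/
theorem balls_into_bins_success :
    ∃ N : ℕ, ∀ n : ℕ, N ≤ n → ∀ φ : ℝ, 1 ≤ φ →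
      φ < Real.logb 2 n / Real.logb 2 (Real.logb 2 n) →
      ∀ k : ℕ, k = 24 * ⌈(n : ℝ) ^ (1 / φ)⌉₊ + 1 →
      ∀ m : ℕ, 1 ≤ m → (m : ℝ) ≤ 12 / φ * (n : ℝ) ^ (1 / φ) * Real.log n →
      ∀ (Ω : Type) (_ : MeasurableSpace Ω) (μ : Measure Ω),
        IsProbabilityMeasure μ →
      ∀ X : Fin m → Ω → Fin k, (∀ i, Measurable (X i)) →
        iIndepFun X μ →
        (∀ (i : Fin m) (j : Fin k), μ {ω | X i ω = j} = (k : ENNReal)⁻¹) →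
        1 - ENNReal.ofReal (1 / (2 * (n : ℝ) ^ (1 / φ))) ≤
          μ {ω | ∃ j : Fin k, ∃! i : Fin m, X i ω = j} := by
  use 3^50
  intro n hn φ hφ1 hφ2 k hk m hm1 hm2 Ω mΩ μ hμ X hXmeas hXindep hXunif
  classical
  have hφpos : (0:ℝ) < φ := by linarith
  set p : ℝ := (n:ℝ) ^ (1/φ) with hpdef
  set L : ℝ := Real.log n with hLdef
  set M : ℝ := (m:ℝ) with hMdef
  set K : ℝ := (k:ℝ) with hKdef
  set u : ℝ := L / φ with hudef
  clear_value p L M K u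
  -- basic numeric facts
  have hn3 : ((3:ℝ))^50 ≤ (n:ℝ) := by
    have : ((3^50 : ℕ) : ℝ) ≤ (n:ℝ) := by exact_mod_cast hn
    push_cast at this
    linarith
  have hnpos : (0:ℝ) < (n:ℝ) := lt_of_lt_of_le (by positivity) hn3
  have hlog3 : (1:ℝ) ≤ Real.log 3 := by
    rw [Real.le_log_iff_exp_le (by norm_num : (0:ℝ) < 3)]
    have := Real.exp_one_lt_d9; linarith
  have hL50 : 50 ≤ L := by
    rw [hLdef]
    have h1 : Real.log ((3:ℝ)^50) ≤ Real.log (n:ℝ) := Real.log_le_log (by positivity) hn3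
    rw [Real.log_pow] at h1
    push_cast at h1
    linarith
  have hpexp : p = Real.exp u := by
    rw [hpdef, Real.rpow_def_of_pos hnpos, hudef, hLdef]
    congr 1
    field_simp
  have hu0 : 0 < u := by rw [hudef]; exact div_pos (by linarith) hφpos
  have huL : u ≤ L := by rw [hudef]; exact div_le_self (by linarith) hφ1
  have hp1 : (1:ℝ) ≤ p := by rw [hpexp]; exact Real.one_le_exp hu0.le
  have hppos : (0:ℝ) < p := by linarith
  -- p is bigger than log base 2 of n
  have hln2pos : 0 < Real.log 2 := Real.log_pos (by norm_num)
  have hln2lt : Real.log 2 < 0.6931471808 := Real.log_two_lt_d9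
  have hLbval : Real.logb 2 (n:ℝ) = L / Real.log 2 := by rw [Real.logb, hLdef]
  have hLbpos : 1 < Real.logb 2 (n:ℝ) := by
    rw [hLbval, lt_div_iff₀ hln2pos]; linarith
  have hLLpos : 0 < Real.logb 2 (Real.logb 2 (n:ℝ)) := Real.logb_pos (by norm_num) hLbpos
  have hkey : φ * Real.logb 2 (Real.logb 2 (n:ℝ)) < Real.logb 2 (n:ℝ) := by
    have h := (lt_div_iff₀ hLLpos).1 hφ2
    linarith
  have hup : Real.log (Real.logb 2 (n:ℝ)) < u := by
    have h1 : Real.logb 2 (Real.logb 2 (n:ℝ))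
        = Real.log (Real.logb 2 (n:ℝ)) / Real.log 2 := by rw [Real.logb]
    rw [h1] at hkey
    rw [hudef, lt_div_iff₀ hφpos]
    have hstep := mul_lt_mul_of_pos_right hkey hln2pos
    have he1 : (φ * (Real.log (Real.logb 2 (n:ℝ)) / Real.log 2)) * Real.log 2
        = φ * Real.log (Real.logb 2 (n:ℝ)) := by
      field_simp
    have he2 : Real.logb 2 (n:ℝ) * Real.log 2 = L := by
      rw [hLbval]; field_simp
    rw [he1, he2] at hstep
    linarith [hstep, (mul_comm (Real.log (Real.logb 2 (n:ℝ))) φ :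
      Real.log (Real.logb 2 (n:ℝ)) * φ = φ * Real.log (Real.logb 2 (n:ℝ)))]
  have hpLb : L / Real.log 2 < p := by
    rw [← hLbval]
    calc Real.logb 2 (n:ℝ) = Real.exp (Real.log (Real.logb 2 (n:ℝ))) :=
          (Real.exp_log (by linarith)).symm
      _ < Real.exp u := Real.exp_lt_exp.2 hup
      _ = p := hpexp.symm
  -- K facts
  have hKval : K = 24 * ((⌈p⌉₊ : ℕ) : ℝ) + 1 := by
    rw [hKdef, hk]; push_cast; ring
  have hK24 : 24 * p < K := by
    have h := Nat.le_ceil p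
    rw [hKval]
    have : 24 * p ≤ 24 * ((⌈p⌉₊ : ℕ) : ℝ) := by linarith
    linarith
  have hK49 : K ≤ 49 * p := by
    have hceil : ((⌈p⌉₊ : ℕ) : ℝ) < p + 1 := Nat.ceil_lt_add_one (by positivity)
    rw [hKval]; linarith
  have hKpos : (0:ℝ) < K := by linarith
  have hkpos : 0 < k := by omega
  -- M facts
  have hM1 : 1 ≤ M := by rw [hMdef]; exact_mod_cast hm1
  have hMpos : (0:ℝ) < M := by linarith
  have hMu : M ≤ 12*(u*p) := by
    have heq : 12/φ * p * L = 12*(u*p) := by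
      rw [hudef]; field_simp
    linarith [hm2, heq.ge]
  -- useful : K * log 2 > 24 L
  have h24L : 24 * L < K * (0.6931471808:ℝ) := by
    have s1 : 24 * L < 24 * (p * Real.log 2) := by
      have := (div_lt_iff₀ hln2pos).1 hpLb
      linarith
    have s2 : 24 * (p * Real.log 2) = (24*p) * Real.log 2 := by ring
    have s3 : (24*p) * Real.log 2 < K * Real.log 2 :=
      mul_lt_mul_of_pos_right hK24 hln2pos
    have s4 : K * Real.log 2 ≤ K * (0.6931471808:ℝ) :=
      mul_le_mul_of_nonneg_left hln2lt.le hKpos.le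
    linarith
  -- MAIN REAL INEQUALITY
  have hbound : (((badSet (Fin m) k).card : ℕ) : ℝ) ≤ K^m * (1/(2*p)) := by
    by_cases hsm : M ≤ 6*L + 1
    · -- small case
      have htM : ((m/2 : ℕ) : ℝ) ≤ M/2 := by
        have h2t : (2 * (m/2) : ℕ) ≤ m := by omega
        have := (Nat.cast_le (α := ℝ)).2 h2t
        push_cast at this
        rw [hMdef]
        linarith
      have hexp1 : Real.exp 1 < 2.7182818286 := Real.exp_one_lt_d9
      have het : Real.exp 1 * ((m/2 : ℕ) : ℝ) ≤ K/4 := by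
        have e1 : Real.exp 1 * ((m/2 : ℕ) : ℝ) ≤ 2.7182818286 * ((6*L+1)/2) := by
          have hnn : (0:ℝ) ≤ ((m/2 : ℕ) : ℝ) := Nat.cast_nonneg _
          have : ((m/2 : ℕ) : ℝ) ≤ (6*L+1)/2 := by linarith
          nlinarith [Real.exp_pos 1]
        linarith [h24L, hL50]
      have htk : m/2 ≤ k := by
        have : ((m/2 : ℕ) : ℝ) < K := by
          have : ((m/2 : ℕ) : ℝ) ≤ (6*L+1)/2 := by linarith
          linarith [h24L, hL50]
        rw [hKdef] at this
        exact_mod_cast this.le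
      have hcomb := badSet_card_le_choose (m := m) (k := k) htk
      have hcast : (((badSet (Fin m) k).card : ℕ) : ℝ)
          ≤ (k.choose (m/2) : ℝ) * ((m/2 : ℕ) : ℝ)^m := by
        have := (Nat.cast_le (α := ℝ)).2 hcomb
        push_cast at this
        exact_mod_cast this
      refine hcast.trans (small_case k (m/2) (m - m/2) m K p hKdef.symm (by omega) (by omega)
        (by omega) hp1 hK24.le het)
    · -- large case
      push_neg at hsm
      set x : ℝ := M/K with hxdef
      have hx0 : 0 < x := div_pos hMpos hKpos
      have hegf := badSet_mul_le x hx0.le k (Fin m)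
      rw [Fintype.card_fin] at hegf
      have hlc := large_case k m K M p u L hKdef.symm hMdef.symm hpexp hu0 huL hL50
        hK24 hK49 hM1 hMu (by linarith)
      have hMm : M^m = x^m * K^m := by
        rw [hxdef, div_pow]
        field_simp
      have hchain : (((badSet (Fin m) k).card : ℕ) : ℝ) * x^m
          ≤ x^m * (K^m * (1/(2*p))) := by
        calc (((badSet (Fin m) k).card : ℕ) : ℝ) * x^m
            ≤ (Real.exp x - x)^k * (Nat.factorial m : ℝ) := hegf
          _ ≤ M^m * (1/(2*p)) := hlc
          _ = x^m * (K^m * (1/(2*p))) := by rw [hMm]; ring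
      have hxmpos : (0:ℝ) < x^m := pow_pos hx0 m
      refine le_of_mul_le_mul_right ?_ hxmpos
      calc (((badSet (Fin m) k).card : ℕ) : ℝ) * x^m
          ≤ x^m * (K^m * (1/(2*p))) := hchain
        _ = K^m * (1/(2*p)) * x^m := by ring
  -- ENNReal glue
  obtain ⟨htrans, hmeasE⟩ := transfer μ X hXmeas hXindep hXunif (badSet (Fin m) k)
  have hkeymem : ∀ f : Fin m → Fin k, f ∈ badSet (Fin m) k ↔ Bad k f := fun f => by
    unfold badSet
    rw [Finset.mem_filter]
    simp only [Finset.mem_univ, true_and]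
  have hsetcompl : {ω | ∃ j : Fin k, ∃! i : Fin m, X i ω = j}
      = {ω | (fun i => X i ω) ∈ badSet (Fin m) k}ᶜ := by
    ext ω
    simp only [Set.mem_compl_iff, Set.mem_setOf_eq, hkeymem, Bad, not_forall, not_not]
  rw [hsetcompl, prob_compl_eq_one_sub hmeasE, htrans]
  refine tsub_le_tsub_left ?_ 1
  -- ENNReal bound
  have hENN : ((badSet (Fin m) k).card : ENNReal) * ((k:ENNReal)⁻¹)^m
      = ENNReal.ofReal (((badSet (Fin m) k).card : ℝ) * (1/K)^m) := by
    rw [ENNReal.ofReal_mul (Nat.cast_nonneg _), ENNReal.ofReal_natCast,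
      ENNReal.ofReal_pow (by positivity)]
    congr 2
    rw [one_div, ENNReal.ofReal_inv_of_pos hKpos, hKdef, ENNReal.ofReal_natCast]
  rw [hENN]
  apply ENNReal.ofReal_le_ofReal
  have hKmpos : (0:ℝ) < K^m := pow_pos hKpos m
  calc (((badSet (Fin m) k).card : ℕ) : ℝ) * (1/K)^m
      ≤ (K^m * (1/(2*p))) * (1/K)^m := by
        refine mul_le_mul_of_nonneg_right hbound (by positivity)
    _ = 1/(2*p) := by
        rw [div_pow, one_pow]
        field_simp
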